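/- Termination bound for the Sinkhorn iteration with the fixed initial vectors: assume a dual-optimal triple exists and let K := min_{j≤m1, l≤m3} Σ_{k≤m2} K^(1)_{jk} K^(2)_{kl}. Then for every δ > 0 there exists n ∈ ℕ with n ≤ 1 + (4/δ²)·log(‖K^(1)‖₁·‖K^(2)‖₁ / K) such that S_n ≤ δ. -/

import Mathlib

open Matrix Finset Real

noncomputable section

/-- The Hilbert projective (pseudo)metric on the positive orthant:
`d_H(u,v) = log((max_i u_i/v_i) · (max_j v_j/u_j))`. -/
def dH {m : ℕ} (u v : Fin m → ℝ) : ℝ :=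
  Real.log ((⨆ i, u i / v i) * (⨆ j, v j / u j))

/-- Birkhoff's ratio `γ(A) = max_{i,j,k,l} (A_{ik}A_{jl})/(A_{jk}A_{il})`. -/
def birkhoffGamma {n m : ℕ} (A : Matrix (Fin n) (Fin m) ℝ) : ℝ :=
  ⨆ p : (Fin n × Fin n) × Fin m × Fin m,
    A p.1.1 p.2.1 * A p.1.2 p.2.2 / (A p.1.2 p.2.1 * A p.1.1 p.2.2)

/-- Birkhoff's contraction coefficient `λ(A) = (√γ(A) − 1)/(√γ(A) + 1)`. -/
def birkhoffLambda {n m : ℕ} (A : Matrix (Fin n) (Fin m) ℝ) : ℝ :=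
  (Real.sqrt (birkhoffGamma A) - 1) / (Real.sqrt (birkhoffGamma A) + 1)

/-- The dual (Lagrangian) function for the sequentially composed OT problem with `M = 2`. -/
def dual2 {m1 m2 m3 : ℕ} (a : Fin m1 → ℝ) (b : Fin m3 → ℝ) (ε : ℝ)
    (C1 : Matrix (Fin m1) (Fin m2) ℝ) (C2 : Matrix (Fin m2) (Fin m3) ℝ)
    (f1 : Fin m1 → ℝ) (f2 : Fin m2 → ℝ) (f3 : Fin m3 → ℝ) : ℝ :=
  (∑ j, f1 j * a j) + (∑ l, f3 l * b l)
    - ε * ((∑ j, ∑ k, Real.exp ((f1 j - f2 k - C1 j k) / ε))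
      + ∑ k, ∑ l, Real.exp ((f2 k + f3 l - C2 k l) / ε))

/-- The matrix `diag(u) K diag(1/v)` induced by the first pair of Sinkhorn vectors. -/
def indMat1 {m1 m2 : ℕ} (u : Fin m1 → ℝ) (K : Matrix (Fin m1) (Fin m2) ℝ)
    (v : Fin m2 → ℝ) : Matrix (Fin m1) (Fin m2) ℝ :=
  Matrix.diagonal u * K * Matrix.diagonal (fun k => (v k)⁻¹)

/-- The matrix `diag(v) K diag(w)` induced by the second pair of Sinkhorn vectors. -/
def indMat2 {m2 m3 : ℕ} (v : Fin m2 → ℝ) (K : Matrix (Fin m2) (Fin m3) ℝ)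
    (w : Fin m3 → ℝ) : Matrix (Fin m2) (Fin m3) ℝ :=
  Matrix.diagonal v * K * Matrix.diagonal w

namespace SinkhornAux

/-- extraction of the first-order condition -/
lemma foc {ε R c : ℝ} (hε : 0 < ε) (h : ∀ t : ℝ, t * c ≤ ε * R * (Real.exp (t/ε) - 1)) :
    c = R := by
  set ψ : ℝ → ℝ := fun t => ε * R * (Real.exp (t/ε) - 1) - t * c with hψ
  have hmin : IsLocalMin ψ 0 := by
    apply Filter.Eventually.of_forall
    intro t
    have h0 : ψ 0 = 0 := by simp [hψ]
    rw [h0]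
    have := h t
    simp only [hψ]
    linarith
  have hd : HasDerivAt ψ (R - c) 0 := by
    have h1 : HasDerivAt (fun t : ℝ => t / ε) (1/ε) 0 := by
      simpa using (hasDerivAt_id (0:ℝ)).div_const ε
    have h2 : HasDerivAt (fun t : ℝ => Real.exp (t/ε)) (Real.exp (0/ε) * (1/ε)) 0 := h1.exp
    have h3 : HasDerivAt (fun t : ℝ => ε * R * (Real.exp (t/ε) - 1))
        (ε * R * (Real.exp (0/ε) * (1/ε))) 0 := ((h2.sub_const 1).const_mul (ε * R))
    have h4 : HasDerivAt (fun t : ℝ => t * c) c 0 := by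
      simpa using (hasDerivAt_id (0:ℝ)).mul_const c
    have := h3.sub h4
    exact this.congr_deriv (by rw [zero_div, Real.exp_zero]; field_simp)
  have := hmin.deriv_eq_zero
  rw [hd.deriv] at this
  linarith

lemma telescope (f : ℕ → ℝ) (N : ℕ) :
    ∑ n ∈ Finset.Ico 1 (N+1), (f (n+1) - f n) = f (N+1) - f 1 := by
  induction N with
  | zero => simp
  | succ N ih => rw [Finset.sum_Ico_succ_top (by omega), ih]; ring

section Main
variable {m1 m2 m3 : ℕ}
variable (K1 : Matrix (Fin m1) (Fin m2) ℝ) (K2 : Matrix (Fin m2) (Fin m3) ℝ)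
variable (a : Fin m1 → ℝ) (b : Fin m3 → ℝ) (ε : ℝ)

def E1 (v : Fin m1 → ℝ) (w : Fin m2 → ℝ) : ℝ := ∑ j, ∑ k, v j * K1 j k / w k
def E2 (w : Fin m2 → ℝ) (z : Fin m3 → ℝ) : ℝ := ∑ k, ∑ l, w k * K2 k l * z l

lemma E1_eq {v : Fin m1 → ℝ} {w : Fin m2 → ℝ} :
    E1 K1 v w = ∑ j, v j * ∑ k, K1 j k * (w k)⁻¹ := by
  unfold E1
  apply Finset.sum_congr rfl
  intro j _
  rw [Finset.mul_sum]
  exact Finset.sum_congr rfl (fun k _ => by rw [div_eq_mul_inv]; ring)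

lemma E2_eq {w : Fin m2 → ℝ} {z : Fin m3 → ℝ} :
    E2 K2 w z = ∑ l, z l * ∑ k, K2 k l * w k := by
  unfold E2
  rw [Finset.sum_comm]
  apply Finset.sum_congr rfl
  intro l _
  rw [Finset.mul_sum]
  exact Finset.sum_congr rfl (fun k _ => by ring)

def G (v : Fin m1 → ℝ) (w : Fin m2 → ℝ) (z : Fin m3 → ℝ) : ℝ :=
  (∑ j, ε * Real.log (v j) * a j) + (∑ l, ε * Real.log (z l) * b l)
    - ε * (E1 K1 v w + E2 K2 w z)

variable {K1 K2 a b ε}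

lemma exp_form1 (hε : 0 < ε) {x y : ℝ} (hx : 0 < x) (hy : 0 < y) (c : ℝ) :
    Real.exp ((ε * Real.log x - ε * Real.log y - c) / ε)
      = x * Real.exp (-c/ε) / y := by
  rw [show (ε * Real.log x - ε * Real.log y - c) / ε
      = Real.log x + (-Real.log y + (-c/ε)) by field_simp; ring,
    Real.exp_add, Real.exp_add, Real.exp_log hx, Real.exp_neg, Real.exp_log hy]
  ring

lemma exp_form2 (hε : 0 < ε) {x y : ℝ} (hx : 0 < x) (hy : 0 < y) (c : ℝ) :
    Real.exp ((ε * Real.log x + ε * Real.log y - c) / ε)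
      = x * Real.exp (-c/ε) * y := by
  rw [show (ε * Real.log x + ε * Real.log y - c) / ε
      = Real.log x + (Real.log y + (-c/ε)) by field_simp; ring,
    Real.exp_add, Real.exp_add, Real.exp_log hx, Real.exp_log hy]
  ring

lemma dual2_eq_G (hε : 0 < ε)
    {C1 : Matrix (Fin m1) (Fin m2) ℝ} {C2 : Matrix (Fin m2) (Fin m3) ℝ}
    (hK1 : ∀ j k, K1 j k = Real.exp (-C1 j k / ε))
    (hK2 : ∀ k l, K2 k l = Real.exp (-C2 k l / ε))
    {v : Fin m1 → ℝ} {w : Fin m2 → ℝ} {z : Fin m3 → ℝ}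
    (hv : ∀ j, 0 < v j) (hw : ∀ k, 0 < w k) (hz : ∀ l, 0 < z l) :
    dual2 a b ε C1 C2 (fun j => ε * Real.log (v j)) (fun k => ε * Real.log (w k))
      (fun l => ε * Real.log (z l)) = G K1 K2 a b ε v w z := by
  have e1 : ∀ j k, Real.exp ((ε * Real.log (v j) - ε * Real.log (w k) - C1 j k) / ε)
      = v j * K1 j k / w k := fun j k => by rw [exp_form1 hε (hv j) (hw k), hK1]
  have e2 : ∀ k l, Real.exp ((ε * Real.log (w k) + ε * Real.log (z l) - C2 k l) / ε)
      = w k * K2 k l * z l := fun k l => by rw [exp_form2 hε (hw k) (hz l), hK2]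
  unfold dual2 G E1 E2
  simp only [e1, e2]

lemma stepA (hm1 : 0 < m1) (hm3 : 0 < m3)
    {v : Fin m1 → ℝ} {w : Fin m2 → ℝ} {z : Fin m3 → ℝ}
    (hv : ∀ j, 0 < v j) (hz : ∀ l, 0 < z l)
    (hK1p : ∀ j k, 0 < K1 j k) (hK2p : ∀ k l, 0 < K2 k l) :
    G K1 K2 a b ε v (fun k => Real.sqrt ((∑ j, K1 j k * v j) / (∑ l, K2 k l * z l))) z
      = G K1 K2 a b ε v w z
        + ε * ((E1 K1 v w + E2 K2 w z)
          - 2 * ∑ k, Real.sqrt (∑ j, K1 j k * v j) * Real.sqrt (∑ l, K2 k l * z l)) := by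
  have hA : ∀ k, 0 < ∑ j, K1 j k * v j := fun k =>
    Finset.sum_pos (fun j _ => mul_pos (hK1p j k) (hv j))
      (Finset.univ_nonempty_iff.2 (Fin.pos_iff_nonempty.1 hm1))
  have hB : ∀ k, 0 < ∑ l, K2 k l * z l := fun k =>
    Finset.sum_pos (fun l _ => mul_pos (hK2p k l) (hz l))
      (Finset.univ_nonempty_iff.2 (Fin.pos_iff_nonempty.1 hm3))
  have hE1' : E1 K1 v (fun k => Real.sqrt ((∑ j, K1 j k * v j) / (∑ l, K2 k l * z l)))
      = ∑ k, Real.sqrt (∑ j, K1 j k * v j) * Real.sqrt (∑ l, K2 k l * z l) := by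
    unfold E1
    rw [Finset.sum_comm]
    apply Finset.sum_congr rfl
    intro k _
    have h1 : ∑ j, v j * K1 j k / Real.sqrt ((∑ j, K1 j k * v j) / (∑ l, K2 k l * z l))
        = (∑ j, K1 j k * v j) / Real.sqrt ((∑ j, K1 j k * v j) / (∑ l, K2 k l * z l)) := by
      rw [← Finset.sum_div]
      congr 1
      exact Finset.sum_congr rfl (fun j _ => by ring)
    rw [h1, Real.sqrt_div (hA k).le, div_div_eq_mul_div, mul_div_right_comm,
      Real.div_sqrt]
  have hE2' : E2 K2 (fun k => Real.sqrt ((∑ j, K1 j k * v j) / (∑ l, K2 k l * z l))) z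
      = ∑ k, Real.sqrt (∑ j, K1 j k * v j) * Real.sqrt (∑ l, K2 k l * z l) := by
    unfold E2
    apply Finset.sum_congr rfl
    intro k _
    have h1 : ∑ l, Real.sqrt ((∑ j, K1 j k * v j) / (∑ l, K2 k l * z l)) * K2 k l * z l
        = Real.sqrt ((∑ j, K1 j k * v j) / (∑ l, K2 k l * z l)) * (∑ l, K2 k l * z l) := by
      rw [Finset.mul_sum]
      exact Finset.sum_congr rfl (fun l _ => by ring)
    rw [h1, Real.sqrt_div (hA k).le, div_mul_eq_mul_div, mul_div_assoc,
      Real.div_sqrt]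
  unfold G
  rw [hE1', hE2']
  ring

lemma stepB (hm2 : 0 < m2) (ha : ∀ j, 0 < a j)
    {v : Fin m1 → ℝ} {w : Fin m2 → ℝ} (z : Fin m3 → ℝ)
    (hv : ∀ j, 0 < v j) (hw : ∀ k, 0 < w k)
    (hK1p : ∀ j k, 0 < K1 j k) (hεp : 0 < ε) :
    G K1 K2 a b ε v w z ≤ G K1 K2 a b ε (fun j => a j / (∑ k, K1 j k * (w k)⁻¹)) w z := by
  have hc : ∀ j, 0 < ∑ k, K1 j k * (w k)⁻¹ := fun j =>
    Finset.sum_pos (fun k _ => mul_pos (hK1p j k) (inv_pos.2 (hw k)))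
      (Finset.univ_nonempty_iff.2 (Fin.pos_iff_nonempty.1 hm2))
  have hEv : ∀ (x : Fin m1 → ℝ), E1 K1 x w = ∑ j, x j * (∑ k, K1 j k * (w k)⁻¹) := by
    intro x
    unfold E1
    apply Finset.sum_congr rfl
    intro j _
    rw [Finset.mul_sum]
    exact Finset.sum_congr rfl (fun k _ => by rw [div_eq_mul_inv]; ring)
  unfold G
  rw [hEv, hEv]
  have key : ∀ j, ε * Real.log (v j) * a j - ε * (v j * (∑ k, K1 j k * (w k)⁻¹))
      ≤ ε * Real.log (a j / (∑ k, K1 j k * (w k)⁻¹)) * a j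
        - ε * ((a j / (∑ k, K1 j k * (w k)⁻¹)) * (∑ k, K1 j k * (w k)⁻¹)) := by
    intro j
    set c := ∑ k, K1 j k * (w k)⁻¹ with hcc
    have hcj := hc j
    have hx : Real.log (v j * c / a j) ≤ v j * c / a j - 1 :=
      Real.log_le_sub_one_of_pos (div_pos (mul_pos (hv j) hcj) (ha j))
    have hl1 : Real.log (v j * c / a j) = Real.log (v j) + Real.log c - Real.log (a j) := by
      rw [Real.log_div (ne_of_gt (mul_pos (hv j) hcj)) (ne_of_gt (ha j)),
        Real.log_mul (ne_of_gt (hv j)) (ne_of_gt hcj)]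
    have hl2 : Real.log (a j / c) = Real.log (a j) - Real.log c :=
      Real.log_div (ne_of_gt (ha j)) (ne_of_gt hcj)
    have hmul := mul_le_mul_of_nonneg_left hx (ha j).le
    rw [hl1] at hmul
    have hfld : a j * (v j * c / a j - 1) = v j * c - a j := by
      rw [mul_sub, mul_one, mul_comm (a j) (v j * c / a j),
        div_mul_cancel₀ _ (ne_of_gt (ha j))]
    rw [hfld] at hmul
    have hdc : a j / c * c = a j := div_mul_cancel₀ _ (ne_of_gt hcj)
    rw [hl2, hdc]
    nlinarith [hεp.le]
  have hsum := Finset.sum_le_sum (fun j (_ : j ∈ Finset.univ) => key j)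
  simp only [Finset.sum_sub_distrib, ← Finset.mul_sum] at hsum
  beta_reduce
  linarith

lemma stepC (hm2 : 0 < m2) (hb : ∀ l, 0 < b l)
    (v : Fin m1 → ℝ) {w : Fin m2 → ℝ} {z : Fin m3 → ℝ}
    (hz : ∀ l, 0 < z l) (hw : ∀ k, 0 < w k)
    (hK2p : ∀ k l, 0 < K2 k l) (hεp : 0 < ε) :
    G K1 K2 a b ε v w z ≤ G K1 K2 a b ε v w (fun l => b l / (∑ k, K2 k l * w k)) := by
  have hd : ∀ l, 0 < ∑ k, K2 k l * w k := fun l =>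
    Finset.sum_pos (fun k _ => mul_pos (hK2p k l) (hw k))
      (Finset.univ_nonempty_iff.2 (Fin.pos_iff_nonempty.1 hm2))
  have hEz : ∀ (x : Fin m3 → ℝ), E2 K2 w x = ∑ l, x l * (∑ k, K2 k l * w k) := by
    intro x
    unfold E2
    rw [Finset.sum_comm]
    apply Finset.sum_congr rfl
    intro l _
    rw [Finset.mul_sum]
    exact Finset.sum_congr rfl (fun k _ => by ring)
  unfold G
  rw [hEz, hEz]
  have key : ∀ l, ε * Real.log (z l) * b l - ε * (z l * (∑ k, K2 k l * w k))
      ≤ ε * Real.log (b l / (∑ k, K2 k l * w k)) * b l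
        - ε * ((b l / (∑ k, K2 k l * w k)) * (∑ k, K2 k l * w k)) := by
    intro l
    set c := ∑ k, K2 k l * w k with hcc
    have hcl := hd l
    have hx : Real.log (z l * c / b l) ≤ z l * c / b l - 1 :=
      Real.log_le_sub_one_of_pos (div_pos (mul_pos (hz l) hcl) (hb l))
    have hl1 : Real.log (z l * c / b l) = Real.log (z l) + Real.log c - Real.log (b l) := by
      rw [Real.log_div (ne_of_gt (mul_pos (hz l) hcl)) (ne_of_gt (hb l)),
        Real.log_mul (ne_of_gt (hz l)) (ne_of_gt hcl)]
    have hl2 : Real.log (b l / c) = Real.log (b l) - Real.log c :=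
      Real.log_div (ne_of_gt (hb l)) (ne_of_gt hcl)
    have hmul := mul_le_mul_of_nonneg_left hx (hb l).le
    rw [hl1] at hmul
    have hfld : b l * (z l * c / b l - 1) = z l * c - b l := by
      rw [mul_sub, mul_one, mul_comm (b l) (z l * c / b l),
        div_mul_cancel₀ _ (ne_of_gt (hb l))]
    rw [hfld] at hmul
    have hdc : b l / c * c = b l := div_mul_cancel₀ _ (ne_of_gt hcl)
    rw [hl2, hdc]
    nlinarith [hεp.le]
  have hsum := Finset.sum_le_sum (fun l (_ : l ∈ Finset.univ) => key l)
  simp only [Finset.sum_sub_distrib, ← Finset.mul_sum] at hsum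
  beta_reduce
  linarith

end Main

end SinkhornAux

open SinkhornAux in
set_option maxHeartbeats 2000000 in
/-- **Termination bound for the Sinkhorn iteration** (Lem. 4.5): with the fixed initial
vectors, if a dual-optimal triple exists then for every `δ > 0` there is an iteration index
`n ≤ 1 + (4/δ²)·log(‖K¹‖₁‖K²‖₁/K)` at which the stopping criterion `S_n ≤ δ` holds. -/
theorem sinkhorn_termination_bound
    {m1 m2 m3 : ℕ} (hm1 : 0 < m1) (hm2 : 0 < m2) (hm3 : 0 < m3)
    (C1 : Matrix (Fin m1) (Fin m2) ℝ) (C2 : Matrix (Fin m2) (Fin m3) ℝ)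
    (hC1 : ∀ j k, 0 ≤ C1 j k) (hC2 : ∀ k l, 0 ≤ C2 k l)
    (a : Fin m1 → ℝ) (b : Fin m3 → ℝ)
    (ha : ∀ j, 0 < a j) (hb : ∀ l, 0 < b l)
    (hasum : ∑ j, a j = 1) (hbsum : ∑ l, b l = 1)
    (ε : ℝ) (hε : 0 < ε)
    (K1 : Matrix (Fin m1) (Fin m2) ℝ) (K2 : Matrix (Fin m2) (Fin m3) ℝ)
    (hK1 : ∀ j k, K1 j k = Real.exp (-C1 j k / ε))
    (hK2 : ∀ k l, K2 k l = Real.exp (-C2 k l / ε))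
    (u1 : ℕ → Fin m1 → ℝ) (u2 : ℕ → Fin m2 → ℝ) (u3 : ℕ → Fin m3 → ℝ)
    (hinit1 : u1 0 = fun _ => 1 / (∑ j, ∑ k, K1 j k))
    (hinit2 : u2 0 = fun _ => 1)
    (hinit3 : u3 0 = fun _ => 1 / (∑ k, ∑ l, K2 k l))
    (hrec2 : ∀ n, u2 (n+1) = fun k => Real.sqrt ((K1ᵀ *ᵥ u1 n) k / (K2 *ᵥ u3 n) k))
    (hrec1 : ∀ n, u1 (n+1) = fun j => a j / (K1 *ᵥ fun k => (u2 (n+1) k)⁻¹) j)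
    (hrec3 : ∀ n, u3 (n+1) = fun l => b l / (K2ᵀ *ᵥ u2 (n+1)) l)
    (uh1 : Fin m1 → ℝ) (uh2 : Fin m2 → ℝ) (uh3 : Fin m3 → ℝ)
    (hpos1 : ∀ j, 0 < uh1 j) (hpos2 : ∀ k, 0 < uh2 k) (hpos3 : ∀ l, 0 < uh3 l)
    (hopt : ∀ (f1 : Fin m1 → ℝ) (f2 : Fin m2 → ℝ) (f3 : Fin m3 → ℝ),
      dual2 a b ε C1 C2 f1 f2 f3 ≤
        dual2 a b ε C1 C2 (fun j => ε * Real.log (uh1 j))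
          (fun k => ε * Real.log (uh2 k)) (fun l => ε * Real.log (uh3 l)))
    (Kmin : ℝ)
    (hKmin : Kmin = ⨅ p : Fin m1 × Fin m3, ∑ k, K1 p.1 k * K2 k p.2)
    (r : ℕ → Fin m2 → ℝ)
    (hr : ∀ n, r n = fun k => Real.sqrt
      (((indMat2 (u2 n) K2 (u3 n)) *ᵥ fun _ => 1) k /
        (((indMat1 (u1 n) K1 (u2 n))ᵀ *ᵥ fun _ => 1) k)))
    (S : ℕ → ℝ)
    (hS : ∀ n, S n =
      (∑ j, |a j - (indMat1 (u1 n) K1 (u2 n) *ᵥ r n) j|)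
        + ∑ l, |b l - ((indMat2 (u2 n) K2 (u3 n))ᵀ *ᵥ fun k => (r n k)⁻¹) l|) :
    ∀ δ : ℝ, 0 < δ →
      ∃ n : ℕ, (n : ℝ) ≤ 1 + 4 / δ ^ 2 *
          Real.log ((∑ j, ∑ k, K1 j k) * (∑ k, ∑ l, K2 k l) / Kmin) ∧
        S n ≤ δ := by
  classical
  have hK1p : ∀ j k, 0 < K1 j k := fun j k => by rw [hK1]; exact Real.exp_pos _
  have hK2p : ∀ k l, 0 < K2 k l := fun k l => by rw [hK2]; exact Real.exp_pos _
  have hne1 : (Finset.univ : Finset (Fin m1)).Nonempty :=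
    Finset.univ_nonempty_iff.2 (Fin.pos_iff_nonempty.1 hm1)
  have hne2 : (Finset.univ : Finset (Fin m2)).Nonempty :=
    Finset.univ_nonempty_iff.2 (Fin.pos_iff_nonempty.1 hm2)
  have hne3 : (Finset.univ : Finset (Fin m3)).Nonempty :=
    Finset.univ_nonempty_iff.2 (Fin.pos_iff_nonempty.1 hm3)
  have hSig1 : 0 < ∑ j, ∑ k, K1 j k :=
    Finset.sum_pos (fun j _ => Finset.sum_pos (fun k _ => hK1p j k) hne2) hne1
  have hSig2 : 0 < ∑ k, ∑ l, K2 k l :=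
    Finset.sum_pos (fun k _ => Finset.sum_pos (fun l _ => hK2p k l) hne3) hne2
  have hmv1 : ∀ (x : Fin m2 → ℝ) (j : Fin m1), (K1 *ᵥ x) j = ∑ k, K1 j k * x k :=
    fun x j => rfl
  have hmv1t : ∀ (x : Fin m1 → ℝ) (k : Fin m2), (K1ᵀ *ᵥ x) k = ∑ j, K1 j k * x j :=
    fun x k => by simp [Matrix.mulVec, dotProduct, Matrix.transpose_apply]
  have hmv2 : ∀ (x : Fin m3 → ℝ) (k : Fin m2), (K2 *ᵥ x) k = ∑ l, K2 k l * x l :=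
    fun x k => rfl
  have hmv2t : ∀ (x : Fin m2 → ℝ) (l : Fin m3), (K2ᵀ *ᵥ x) l = ∑ k, K2 k l * x k :=
    fun x l => by simp [Matrix.mulVec, dotProduct, Matrix.transpose_apply]
  -- positivity of the iterates
  have hu : ∀ n, (∀ j, 0 < u1 n j) ∧ (∀ k, 0 < u2 n k) ∧ (∀ l, 0 < u3 n l) := by
    intro n
    induction n with
    | zero =>
      refine ⟨fun j => ?_, fun k => ?_, fun l => ?_⟩
      · simp only [hinit1]; exact div_pos one_pos hSig1
      · simp only [hinit2]; norm_num
      · simp only [hinit3]; exact div_pos one_pos hSig2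
    | succ n ih =>
      obtain ⟨ih1, ih2, ih3⟩ := ih
      have h2 : ∀ k, 0 < u2 (n+1) k := by
        intro k
        simp only [hrec2]
        apply Real.sqrt_pos.2
        apply div_pos
        · rw [hmv1t]; exact Finset.sum_pos (fun j _ => mul_pos (hK1p j k) (ih1 j)) hne1
        · rw [hmv2]; exact Finset.sum_pos (fun l _ => mul_pos (hK2p k l) (ih3 l)) hne3
      refine ⟨fun j => ?_, h2, fun l => ?_⟩
      · simp only [hrec1]
        apply div_pos (ha j)
        rw [hmv1]
        exact Finset.sum_pos (fun k _ => mul_pos (hK1p j k) (inv_pos.2 (h2 k))) hne2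
      · simp only [hrec3]
        apply div_pos (hb l)
        rw [hmv2t]
        exact Finset.sum_pos (fun k _ => mul_pos (hK2p k l) (h2 k)) hne2
  -- abbreviations
  set L : ℕ → ℝ := fun n => SinkhornAux.G K1 K2 a b ε (u1 n) (u2 n) (u3 n) with hLdef
  set p : ℕ → Fin m2 → ℝ := fun n k => (∑ j, K1 j k * u1 n j) / u2 n k with hpdef
  set q : ℕ → Fin m2 → ℝ := fun n k => u2 n k * (∑ l, K2 k l * u3 n l) with hqdef
  set H2 : ℕ → ℝ := fun n => ∑ k, (Real.sqrt (p n k) - Real.sqrt (q n k))^2 with hH2def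
  have hApos : ∀ n k, 0 < ∑ j, K1 j k * u1 n j := fun n k =>
    Finset.sum_pos (fun j _ => mul_pos (hK1p j k) ((hu n).1 j)) hne1
  have hBpos : ∀ n k, 0 < ∑ l, K2 k l * u3 n l := fun n k =>
    Finset.sum_pos (fun l _ => mul_pos (hK2p k l) ((hu n).2.2 l)) hne3
  have hppos : ∀ n k, 0 < p n k := fun n k => by
    simp only [hpdef]; exact div_pos (hApos n k) ((hu n).2.1 k)
  have hqpos : ∀ n k, 0 < q n k := fun n k => by
    simp only [hqdef]; exact mul_pos ((hu n).2.1 k) (hBpos n k)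
  have hH2nonneg : ∀ n, 0 ≤ H2 n := fun n => by
    simp only [hH2def]; exact Finset.sum_nonneg fun k _ => sq_nonneg _
  have hcpos : ∀ n j, 0 < ∑ k, K1 j k * (u2 n k)⁻¹ := fun n j =>
    Finset.sum_pos (fun k _ => mul_pos (hK1p j k) (inv_pos.2 ((hu n).2.1 k))) hne2
  have hdpos : ∀ n l, 0 < ∑ k, K2 k l * u2 n k := fun n l =>
    Finset.sum_pos (fun k _ => mul_pos (hK2p k l) ((hu n).2.1 k)) hne2
  -- E1, E2 in terms of p and q
  have hE1p : ∀ n, SinkhornAux.E1 K1 (u1 n) (u2 n) = ∑ k, p n k := by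
    intro n
    unfold SinkhornAux.E1
    rw [Finset.sum_comm]
    apply Finset.sum_congr rfl; intro k _
    simp only [hpdef]
    rw [Finset.sum_div]
    exact Finset.sum_congr rfl fun j _ => by ring
  have hE2q : ∀ n, SinkhornAux.E2 K2 (u2 n) (u3 n) = ∑ k, q n k := by
    intro n
    unfold SinkhornAux.E2
    apply Finset.sum_congr rfl; intro k _
    simp only [hqdef]
    rw [Finset.mul_sum]
    exact Finset.sum_congr rfl fun l _ => by ring
  have hE1one : ∀ n, SinkhornAux.E1 K1 (u1 (n+1)) (u2 (n+1)) = 1 := by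
    intro n
    rw [SinkhornAux.E1_eq]
    have hterm : ∀ j, u1 (n+1) j * (∑ k, K1 j k * (u2 (n+1) k)⁻¹) = a j := by
      intro j
      simp only [hrec1 n]
      rw [hmv1]
      exact div_mul_cancel₀ _ (ne_of_gt (hcpos (n+1) j))
    rw [Finset.sum_congr rfl (fun j _ => hterm j), hasum]
  have hE2one : ∀ n, SinkhornAux.E2 K2 (u2 (n+1)) (u3 (n+1)) = 1 := by
    intro n
    rw [SinkhornAux.E2_eq]
    have hterm : ∀ l, u3 (n+1) l * (∑ k, K2 k l * u2 (n+1) k) = b l := by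
      intro l
      simp only [hrec3 n]
      rw [hmv2t]
      exact div_mul_cancel₀ _ (ne_of_gt (hdpos (n+1) l))
    rw [Finset.sum_congr rfl (fun l _ => hterm l), hbsum]
  have hpsum : ∀ n, ∑ k, p (n+1) k = 1 := fun n => by rw [← hE1p, hE1one]
  have hqsum : ∀ n, ∑ k, q (n+1) k = 1 := fun n => by rw [← hE2q, hE2one]
  have hsqrtpq : ∀ n k, Real.sqrt (p n k) * Real.sqrt (q n k)
      = Real.sqrt (∑ j, K1 j k * u1 n j) * Real.sqrt (∑ l, K2 k l * u3 n l) := by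
    intro n k
    rw [← Real.sqrt_mul (hppos n k).le, ← Real.sqrt_mul (hApos n k).le]
    congr 1
    simp only [hpdef, hqdef]
    field_simp [((hu n).2.1 k).ne']
  -- the exact gain of the middle update
  have hstepA : ∀ n, SinkhornAux.G K1 K2 a b ε (u1 n) (u2 (n+1)) (u3 n) = L n + ε * H2 n := by
    intro n
    have hrw : u2 (n+1) = fun k => Real.sqrt ((∑ j, K1 j k * u1 n j) / (∑ l, K2 k l * u3 n l)) := by
      rw [hrec2 n]; funext k; rw [hmv1t, hmv2]
    rw [hrw, SinkhornAux.stepA (w := u2 n) hm1 hm3 (hu n).1 (hu n).2.2 hK1p hK2p]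
    have hH2exp : H2 n = (SinkhornAux.E1 K1 (u1 n) (u2 n) + SinkhornAux.E2 K2 (u2 n) (u3 n))
        - 2 * ∑ k, Real.sqrt (∑ j, K1 j k * u1 n j) * Real.sqrt (∑ l, K2 k l * u3 n l) := by
      rw [hE1p n, hE2q n, ← Finset.sum_congr rfl (fun k (_ : k ∈ Finset.univ) => hsqrtpq n k)]
      simp only [hH2def]
      have hk : ∀ k, (Real.sqrt (p n k) - Real.sqrt (q n k))^2
          = p n k + q n k - 2*(Real.sqrt (p n k) * Real.sqrt (q n k)) := by
        intro k
        rw [sub_sq, Real.sq_sqrt (hppos n k).le, Real.sq_sqrt (hqpos n k).le]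
        ring
      rw [Finset.sum_congr rfl (fun k _ => hk k), Finset.sum_sub_distrib,
        Finset.sum_add_distrib, ← Finset.mul_sum]
    rw [hH2exp, hLdef]
  have hgain : ∀ n, L n + ε * H2 n ≤ L (n+1) := by
    intro n
    have hstep2 : SinkhornAux.G K1 K2 a b ε (u1 n) (u2 (n+1)) (u3 n)
        ≤ SinkhornAux.G K1 K2 a b ε (u1 (n+1)) (u2 (n+1)) (u3 n) := by
      have hu1rw : u1 (n+1) = fun j => a j / ∑ k, K1 j k * (u2 (n+1) k)⁻¹ := by
        rw [hrec1 n]; funext j; rw [hmv1]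
      rw [hu1rw]
      exact SinkhornAux.stepB hm2 ha (u3 n) (hu n).1 ((hu (n+1)).2.1) hK1p hε
    have hstep3 : SinkhornAux.G K1 K2 a b ε (u1 (n+1)) (u2 (n+1)) (u3 n)
        ≤ SinkhornAux.G K1 K2 a b ε (u1 (n+1)) (u2 (n+1)) (u3 (n+1)) := by
      have hu3rw : u3 (n+1) = fun l => b l / ∑ k, K2 k l * u2 (n+1) k := by
        rw [hrec3 n]; funext l; rw [hmv2t]
      rw [hu3rw]
      exact SinkhornAux.stepC hm2 hb (u1 (n+1)) (hu n).2.2 ((hu (n+1)).2.1) hK2p hε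
    calc L n + ε * H2 n = SinkhornAux.G K1 K2 a b ε (u1 n) (u2 (n+1)) (u3 n) := (hstepA n).symm
      _ ≤ SinkhornAux.G K1 K2 a b ε (u1 (n+1)) (u2 (n+1)) (u3 n) := hstep2
      _ ≤ SinkhornAux.G K1 K2 a b ε (u1 (n+1)) (u2 (n+1)) (u3 (n+1)) := hstep3
      _ = L (n+1) := by rw [hLdef]
  have hmono : ∀ n, L n ≤ L (n+1) := by
    intro n
    have h1 := hgain n
    have h2 : 0 ≤ ε * H2 n := mul_nonneg hε.le (hH2nonneg n)
    linarith
  -- every dual value is below the optimal one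
  have hGh_ge : ∀ n, L n ≤ SinkhornAux.G K1 K2 a b ε uh1 uh2 uh3 := by
    intro n
    have h := hopt (fun j => ε * Real.log (u1 n j)) (fun k => ε * Real.log (u2 n k))
      (fun l => ε * Real.log (u3 n l))
    rwa [SinkhornAux.dual2_eq_G hε hK1 hK2 (hu n).1 (hu n).2.1 (hu n).2.2,
      SinkhornAux.dual2_eq_G hε hK1 hK2 hpos1 hpos2 hpos3] at h
  -- first-order conditions at the optimum
  have hfoc1 : ∀ j, a j = uh1 j * ∑ k, K1 j k * (uh2 k)⁻¹ := by
    intro j0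
    apply SinkhornAux.foc hε
    intro t
    have h := hopt (fun j => ε * Real.log (uh1 j) + (if j = j0 then t else 0))
      (fun k => ε * Real.log (uh2 k)) (fun l => ε * Real.log (uh3 l))
    set R := ∑ k, Real.exp ((ε * Real.log (uh1 j0) - ε * Real.log (uh2 k) - C1 j0 k)/ε)
      with hRdef
    have hcomp : dual2 a b ε C1 C2 (fun j => ε * Real.log (uh1 j) + (if j = j0 then t else 0))
        (fun k => ε * Real.log (uh2 k)) (fun l => ε * Real.log (uh3 l))
        = dual2 a b ε C1 C2 (fun j => ε * Real.log (uh1 j)) (fun k => ε * Real.log (uh2 k))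
          (fun l => ε * Real.log (uh3 l)) + t * a j0 - ε * ((Real.exp (t/ε) - 1) * R) := by
      unfold dual2
      have e1 : ∑ j, (ε * Real.log (uh1 j) + (if j = j0 then t else 0)) * a j
          = (∑ j, ε * Real.log (uh1 j) * a j) + t * a j0 := by
        have hper : ∀ j, (ε * Real.log (uh1 j) + (if j = j0 then t else 0)) * a j
            = ε * Real.log (uh1 j) * a j + (if j = j0 then t * a j else 0) := by
          intro j
          by_cases hj : j = j0
          · rw [if_pos hj, if_pos hj]; ring
          · rw [if_neg hj, if_neg hj]; ring
        rw [Finset.sum_congr rfl fun j _ => hper j, Finset.sum_add_distrib,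
          Finset.sum_ite_eq' Finset.univ j0 (fun j => t * a j)]
        simp
      have e2 : ∑ j, ∑ k, Real.exp (((ε * Real.log (uh1 j) + (if j = j0 then t else 0))
            - ε * Real.log (uh2 k) - C1 j k)/ε)
          = (∑ j, ∑ k, Real.exp ((ε * Real.log (uh1 j) - ε * Real.log (uh2 k) - C1 j k)/ε))
            + (Real.exp (t/ε) - 1) * R := by
        have hterm : ∀ j, ∑ k, Real.exp (((ε * Real.log (uh1 j) + (if j = j0 then t else 0))
              - ε * Real.log (uh2 k) - C1 j k)/ε)
            = (∑ k, Real.exp ((ε * Real.log (uh1 j) - ε * Real.log (uh2 k) - C1 j k)/ε))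
              + (if j = j0 then (Real.exp (t/ε) - 1) * R else 0) := by
          intro j
          by_cases hj : j = j0
          · rw [hj]
            have hper : ∀ k, Real.exp (((ε * Real.log (uh1 j0) + (if j0 = j0 then t else 0))
                  - ε * Real.log (uh2 k) - C1 j0 k)/ε)
                = Real.exp ((ε * Real.log (uh1 j0) - ε * Real.log (uh2 k) - C1 j0 k)/ε)
                  * Real.exp (t/ε) := by
              intro k
              rw [if_pos rfl, ← Real.exp_add]
              congr 1
              field_simp
              ring
            rw [Finset.sum_congr rfl fun k _ => hper k, ← Finset.sum_mul, if_pos rfl, hRdef]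
            ring
          · have hper : ∀ k, Real.exp (((ε * Real.log (uh1 j) + (if j = j0 then t else 0))
                  - ε * Real.log (uh2 k) - C1 j k)/ε)
                = Real.exp ((ε * Real.log (uh1 j) - ε * Real.log (uh2 k) - C1 j k)/ε) := by
              intro k
              rw [if_neg hj, add_zero]
            rw [Finset.sum_congr rfl fun k _ => hper k, if_neg hj, add_zero]
        rw [Finset.sum_congr rfl fun j _ => hterm j, Finset.sum_add_distrib,
          Finset.sum_ite_eq' Finset.univ j0 (fun _ => (Real.exp (t/ε) - 1) * R)]
        simp
      rw [e1, e2]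
      ring
    rw [hcomp] at h
    have hR : R = uh1 j0 * ∑ k, K1 j0 k * (uh2 k)⁻¹ := by
      rw [hRdef, Finset.sum_congr rfl fun k (_ : k ∈ Finset.univ) =>
        SinkhornAux.exp_form1 hε (hpos1 j0) (hpos2 k) (C1 j0 k)]
      simp only [← hK1]
      rw [Finset.mul_sum]
      exact Finset.sum_congr rfl fun k _ => by rw [div_eq_mul_inv]; ring
    rw [hR] at h
    linarith
  have hfoc3 : ∀ l, b l = uh3 l * ∑ k, K2 k l * uh2 k := by
    intro l0
    apply SinkhornAux.foc hε
    intro t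
    have h := hopt (fun j => ε * Real.log (uh1 j)) (fun k => ε * Real.log (uh2 k))
      (fun l => ε * Real.log (uh3 l) + (if l = l0 then t else 0))
    set R := ∑ k, Real.exp ((ε * Real.log (uh2 k) + ε * Real.log (uh3 l0) - C2 k l0)/ε)
      with hRdef
    have hcomp : dual2 a b ε C1 C2 (fun j => ε * Real.log (uh1 j))
        (fun k => ε * Real.log (uh2 k)) (fun l => ε * Real.log (uh3 l) + (if l = l0 then t else 0))
        = dual2 a b ε C1 C2 (fun j => ε * Real.log (uh1 j)) (fun k => ε * Real.log (uh2 k))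
          (fun l => ε * Real.log (uh3 l)) + t * b l0 - ε * ((Real.exp (t/ε) - 1) * R) := by
      unfold dual2
      have e1 : ∑ l, (ε * Real.log (uh3 l) + (if l = l0 then t else 0)) * b l
          = (∑ l, ε * Real.log (uh3 l) * b l) + t * b l0 := by
        have hper : ∀ l, (ε * Real.log (uh3 l) + (if l = l0 then t else 0)) * b l
            = ε * Real.log (uh3 l) * b l + (if l = l0 then t * b l else 0) := by
          intro l
          by_cases hl : l = l0
          · rw [if_pos hl, if_pos hl]; ring
          · rw [if_neg hl, if_neg hl]; ring
        rw [Finset.sum_congr rfl fun l _ => hper l, Finset.sum_add_distrib,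
          Finset.sum_ite_eq' Finset.univ l0 (fun l => t * b l)]
        simp
      have e2 : ∑ k, ∑ l, Real.exp ((ε * Real.log (uh2 k)
            + (ε * Real.log (uh3 l) + (if l = l0 then t else 0)) - C2 k l)/ε)
          = (∑ k, ∑ l, Real.exp ((ε * Real.log (uh2 k) + ε * Real.log (uh3 l) - C2 k l)/ε))
            + (Real.exp (t/ε) - 1) * R := by
        have hterm : ∀ k, ∑ l, Real.exp ((ε * Real.log (uh2 k)
              + (ε * Real.log (uh3 l) + (if l = l0 then t else 0)) - C2 k l)/ε)
            = (∑ l, Real.exp ((ε * Real.log (uh2 k) + ε * Real.log (uh3 l) - C2 k l)/ε))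
              + (Real.exp (t/ε) - 1)
                * Real.exp ((ε * Real.log (uh2 k) + ε * Real.log (uh3 l0) - C2 k l0)/ε) := by
          intro k
          have hper : ∀ l, Real.exp ((ε * Real.log (uh2 k)
                + (ε * Real.log (uh3 l) + (if l = l0 then t else 0)) - C2 k l)/ε)
              = Real.exp ((ε * Real.log (uh2 k) + ε * Real.log (uh3 l) - C2 k l)/ε)
                + (if l = l0 then (Real.exp (t/ε) - 1)
                  * Real.exp ((ε * Real.log (uh2 k) + ε * Real.log (uh3 l0) - C2 k l0)/ε)
                  else 0) := by
            intro l
            by_cases hl : l = l0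
            · rw [hl]
              rw [if_pos rfl, if_pos rfl,
                show (ε * Real.log (uh2 k) + (ε * Real.log (uh3 l0) + t) - C2 k l0)/ε
                  = (ε * Real.log (uh2 k) + ε * Real.log (uh3 l0) - C2 k l0)/ε + t/ε from by
                  field_simp
                  ring,
                Real.exp_add]
              ring
            · rw [if_neg hl, if_neg hl, add_zero, add_zero]
          rw [Finset.sum_congr rfl fun l _ => hper l, Finset.sum_add_distrib,
            Finset.sum_ite_eq' Finset.univ l0 (fun _ => (Real.exp (t/ε) - 1)
              * Real.exp ((ε * Real.log (uh2 k) + ε * Real.log (uh3 l0) - C2 k l0)/ε))]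
          simp
        rw [Finset.sum_congr rfl fun k _ => hterm k, Finset.sum_add_distrib,
          ← Finset.mul_sum, hRdef]
      rw [e1, e2]
      ring
    rw [hcomp] at h
    have hR : R = uh3 l0 * ∑ k, K2 k l0 * uh2 k := by
      rw [hRdef, Finset.sum_congr rfl fun k (_ : k ∈ Finset.univ) =>
        SinkhornAux.exp_form2 hε (hpos2 k) (hpos3 l0) (C2 k l0)]
      simp only [← hK2]
      rw [Finset.mul_sum]
      exact Finset.sum_congr rfl fun k _ => by ring
    rw [hR] at h
    linarith
  have hE1hat : SinkhornAux.E1 K1 uh1 uh2 = 1 := by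
    rw [SinkhornAux.E1_eq, Finset.sum_congr rfl (fun j (_ : j ∈ Finset.univ) => (hfoc1 j).symm), hasum]
  have hE2hat : SinkhornAux.E2 K2 uh2 uh3 = 1 := by
    rw [SinkhornAux.E2_eq, Finset.sum_congr rfl (fun l (_ : l ∈ Finset.univ) => (hfoc3 l).symm), hbsum]
  -- Kmin facts
  haveI : Nonempty (Fin m1) := Fin.pos_iff_nonempty.1 hm1
  haveI : Nonempty (Fin m3) := Fin.pos_iff_nonempty.1 hm3
  have hKsum : ∀ (j : Fin m1) (l : Fin m3), 0 < ∑ k, K1 j k * K2 k l := fun j l =>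
    Finset.sum_pos (fun k _ => mul_pos (hK1p j k) (hK2p k l)) hne2
  have hKminle : ∀ j l, Kmin ≤ ∑ k, K1 j k * K2 k l := by
    intro j l
    rw [hKmin]
    exact ciInf_le (Finite.bddBelow_range _) (j, l)
  have hKminpos : 0 < Kmin := by
    rw [hKmin]
    obtain ⟨p0, hp0⟩ := Finite.exists_min (fun pr : Fin m1 × Fin m3 => ∑ k, K1 pr.1 k * K2 k pr.2)
    exact lt_of_lt_of_le (hKsum p0.1 p0.2) (le_ciInf hp0)
  -- the key upper bound on the optimal dual value
  have hauxle1 : ∀ j, a j ≤ 1 := by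
    intro j
    calc a j ≤ ∑ j', a j' := Finset.single_le_sum (fun i _ => (ha i).le) (Finset.mem_univ j)
      _ = 1 := hasum
  have hble1 : ∀ l, b l ≤ 1 := by
    intro l
    calc b l ≤ ∑ l', b l' := Finset.single_le_sum (fun i _ => (hb i).le) (Finset.mem_univ l)
      _ = 1 := hbsum
  have hprod : ∀ j l, uh1 j * uh3 l * Kmin ≤ a j * b l := by
    intro j l
    have huh2 : ∀ k, (0:ℝ) < (uh2 k)⁻¹ := fun k => inv_pos.2 (hpos2 k)
    have h1 : ∑ k, K1 j k * K2 k l ≤ (∑ k, K1 j k * (uh2 k)⁻¹) * (∑ k, K2 k l * uh2 k) := by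
      have hterm : ∀ k, K1 j k * K2 k l = (K1 j k * (uh2 k)⁻¹) * (K2 k l * uh2 k) := by
        intro k
        have h0 : (uh2 k)⁻¹ * uh2 k = 1 := inv_mul_cancel₀ (hpos2 k).ne'
        linear_combination (-(K1 j k * K2 k l)) * h0
      rw [Finset.sum_congr rfl (fun k _ => hterm k)]
      calc ∑ k, (K1 j k * (uh2 k)⁻¹) * (K2 k l * uh2 k)
          ≤ ∑ k, (K1 j k * (uh2 k)⁻¹) * (∑ k', K2 k' l * uh2 k') := by
            apply Finset.sum_le_sum
            intro k _
            apply mul_le_mul_of_nonneg_left _ (mul_pos (hK1p j k) (huh2 k)).le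
            exact Finset.single_le_sum (fun k' _ => (mul_pos (hK2p k' l) (hpos2 k')).le)
              (Finset.mem_univ k)
        _ = (∑ k, K1 j k * (uh2 k)⁻¹) * (∑ k, K2 k l * uh2 k) := (Finset.sum_mul _ _ _).symm
    calc uh1 j * uh3 l * Kmin
        ≤ uh1 j * uh3 l * ∑ k, K1 j k * K2 k l :=
          mul_le_mul_of_nonneg_left (hKminle j l) (mul_pos (hpos1 j) (hpos3 l)).le
      _ ≤ uh1 j * uh3 l * ((∑ k, K1 j k * (uh2 k)⁻¹) * (∑ k, K2 k l * uh2 k)) :=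
          mul_le_mul_of_nonneg_left h1 (mul_pos (hpos1 j) (hpos3 l)).le
      _ = (uh1 j * ∑ k, K1 j k * (uh2 k)⁻¹) * (uh3 l * ∑ k, K2 k l * uh2 k) := by ring
      _ = a j * b l := by rw [← hfoc1 j, ← hfoc3 l]
  have hloguh : ∀ j l, Real.log (uh1 j) + Real.log (uh3 l) ≤ -Real.log Kmin := by
    intro j l
    have h1 : uh1 j * uh3 l * Kmin ≤ 1 := by
      calc uh1 j * uh3 l * Kmin ≤ a j * b l := hprod j l
        _ ≤ 1 := by nlinarith [hauxle1 j, hble1 l, (ha j), (hb l)]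
    have h2 : Real.log (uh1 j * uh3 l * Kmin) ≤ 0 :=
      Real.log_nonpos (mul_pos (mul_pos (hpos1 j) (hpos3 l)) hKminpos).le h1
    rw [Real.log_mul (mul_pos (hpos1 j) (hpos3 l)).ne' hKminpos.ne',
      Real.log_mul (hpos1 j).ne' (hpos3 l).ne'] at h2
    linarith
  have hGh_le : SinkhornAux.G K1 K2 a b ε uh1 uh2 uh3 ≤ ε * (-Real.log Kmin) - 2*ε := by
    have hsum2 : (∑ j, Real.log (uh1 j) * a j) + (∑ l, Real.log (uh3 l) * b l)
        ≤ -Real.log Kmin := by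
      have h1 : ∑ j, Real.log (uh1 j) * a j = ∑ j, ∑ l, Real.log (uh1 j) * a j * b l := by
        apply Finset.sum_congr rfl
        intro j _
        rw [← Finset.mul_sum, hbsum, mul_one]
      have h3 : ∑ l, Real.log (uh3 l) * b l = ∑ j, ∑ l, Real.log (uh3 l) * b l * a j := by
        rw [Finset.sum_comm]
        apply Finset.sum_congr rfl
        intro l _
        rw [← Finset.mul_sum, hasum, mul_one]
      rw [h1, h3, ← Finset.sum_add_distrib]
      have h4 : ∀ j : Fin m1, (∑ l, Real.log (uh1 j) * a j * b l)
          + (∑ l, Real.log (uh3 l) * b l * a j)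
          = ∑ l, (Real.log (uh1 j) * a j * b l + Real.log (uh3 l) * b l * a j) :=
        fun j => (Finset.sum_add_distrib).symm
      rw [Finset.sum_congr rfl (fun j _ => h4 j)]
      calc ∑ j, ∑ l, (Real.log (uh1 j) * a j * b l + Real.log (uh3 l) * b l * a j)
          ≤ ∑ j, ∑ l, -Real.log Kmin * (a j * b l) := by
            apply Finset.sum_le_sum; intro j _
            apply Finset.sum_le_sum; intro l _
            have h := mul_le_mul_of_nonneg_right (hloguh j l) (mul_pos (ha j) (hb l)).le
            nlinarith [h]
        _ = -Real.log Kmin := by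
            have h5 : ∀ j : Fin m1, ∑ l, -Real.log Kmin * (a j * b l)
                = -Real.log Kmin * a j := by
              intro j
              rw [← Finset.mul_sum, ← Finset.mul_sum, hbsum, mul_one]
            rw [Finset.sum_congr rfl (fun j _ => h5 j), ← Finset.mul_sum, hasum, mul_one]
    unfold SinkhornAux.G
    rw [hE1hat, hE2hat]
    have hfac1 : ∑ j, ε * Real.log (uh1 j) * a j = ε * ∑ j, Real.log (uh1 j) * a j := by
      rw [Finset.mul_sum]; exact Finset.sum_congr rfl fun j _ => by ring
    have hfac3 : ∑ l, ε * Real.log (uh3 l) * b l = ε * ∑ l, Real.log (uh3 l) * b l := by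
      rw [Finset.mul_sum]; exact Finset.sum_congr rfl fun l _ => by ring
    rw [hfac1, hfac3]
    have hfin := mul_le_mul_of_nonneg_left hsum2 hε.le
    nlinarith [hfin]
  -- value of the initial dual
  have hL0 : L 0 = -(ε * Real.log (∑ j, ∑ k, K1 j k)) - ε * Real.log (∑ k, ∑ l, K2 k l) - 2*ε := by
    have hE1v : SinkhornAux.E1 K1 (u1 0) (u2 0) = 1 := by
      unfold SinkhornAux.E1
      simp only [hinit1, hinit2, div_one, ← Finset.mul_sum]
      rw [one_div, inv_mul_cancel₀ hSig1.ne']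
    have hE2v : SinkhornAux.E2 K2 (u2 0) (u3 0) = 1 := by
      unfold SinkhornAux.E2
      simp only [hinit2, hinit3, one_mul, ← Finset.sum_mul]
      rw [one_div, mul_inv_cancel₀ hSig2.ne']
    have hlog1 : ∑ j, ε * Real.log (1 / (∑ j', ∑ k, K1 j' k)) * a j
        = -(ε * Real.log (∑ j', ∑ k, K1 j' k)) := by
      rw [← Finset.mul_sum, hasum, mul_one, one_div, Real.log_inv]
      ring
    have hlog3 : ∑ l, ε * Real.log (1 / (∑ k, ∑ l', K2 k l')) * b l
        = -(ε * Real.log (∑ k, ∑ l', K2 k l')) := by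
      rw [← Finset.mul_sum, hbsum, mul_one, one_div, Real.log_inv]
      ring
    simp only [hLdef]
    unfold SinkhornAux.G
    rw [hE1v, hE2v]
    simp only [hinit1, hinit3]
    rw [hlog1, hlog3]
    ring
  -- stopping criterion bound
  have hSbound : ∀ m, (S (m+1))^2 ≤ 4 * H2 (m+1) := by
    intro m
    have hM1 : ∀ j k, indMat1 (u1 (m+1)) K1 (u2 (m+1)) j k
        = u1 (m+1) j * K1 j k * (u2 (m+1) k)⁻¹ := by
      intro j k
      simp [indMat1, Matrix.mul_diagonal, Matrix.diagonal_mul]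
    have hM2 : ∀ k l, indMat2 (u2 (m+1)) K2 (u3 (m+1)) k l
        = u2 (m+1) k * K2 k l * u3 (m+1) l := by
      intro k l
      simp [indMat2, Matrix.mul_diagonal, Matrix.diagonal_mul]
    have hM1pos : ∀ j k, 0 < indMat1 (u1 (m+1)) K1 (u2 (m+1)) j k := fun j k => by
      rw [hM1]
      exact mul_pos (mul_pos ((hu (m+1)).1 j) (hK1p j k)) (inv_pos.2 ((hu (m+1)).2.1 k))
    have hM2pos : ∀ k l, 0 < indMat2 (u2 (m+1)) K2 (u3 (m+1)) k l := fun k l => by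
      rw [hM2]
      exact mul_pos (mul_pos ((hu (m+1)).2.1 k) (hK2p k l)) ((hu (m+1)).2.2 l)
    have hrow : ∀ j, ∑ k, indMat1 (u1 (m+1)) K1 (u2 (m+1)) j k = a j := by
      intro j
      rw [Finset.sum_congr rfl fun k (_ : k ∈ Finset.univ) => hM1 j k]
      have he : ∑ k, u1 (m+1) j * K1 j k * (u2 (m+1) k)⁻¹
          = u1 (m+1) j * ∑ k, K1 j k * (u2 (m+1) k)⁻¹ := by
        rw [Finset.mul_sum]; exact Finset.sum_congr rfl fun k _ => by ring
      rw [he]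
      simp only [hrec1 m]
      rw [hmv1]
      exact div_mul_cancel₀ _ (ne_of_gt (hcpos (m+1) j))
    have hcol : ∀ l, ∑ k, indMat2 (u2 (m+1)) K2 (u3 (m+1)) k l = b l := by
      intro l
      rw [Finset.sum_congr rfl fun k (_ : k ∈ Finset.univ) => hM2 k l]
      have he : ∑ k, u2 (m+1) k * K2 k l * u3 (m+1) l
          = (∑ k, K2 k l * u2 (m+1) k) * u3 (m+1) l := by
        rw [Finset.sum_mul]; exact Finset.sum_congr rfl fun k _ => by ring
      rw [he]
      simp only [hrec3 m]
      rw [hmv2t, mul_comm]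
      exact div_mul_cancel₀ _ (ne_of_gt (hdpos (m+1) l))
    have hcolP1 : ∀ k, ∑ j, indMat1 (u1 (m+1)) K1 (u2 (m+1)) j k = p (m+1) k := by
      intro k
      rw [Finset.sum_congr rfl fun j (_ : j ∈ Finset.univ) => hM1 j k]
      simp only [hpdef]
      rw [div_eq_mul_inv, Finset.sum_mul]
      exact Finset.sum_congr rfl fun j _ => by ring
    have hrowP2 : ∀ k, ∑ l, indMat2 (u2 (m+1)) K2 (u3 (m+1)) k l = q (m+1) k := by
      intro k
      rw [Finset.sum_congr rfl fun l (_ : l ∈ Finset.univ) => hM2 k l]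
      simp only [hqdef]
      rw [Finset.mul_sum]
      exact Finset.sum_congr rfl fun l _ => by ring
    have hrn : ∀ k, r (m+1) k = Real.sqrt (q (m+1) k / p (m+1) k) := by
      intro k
      simp only [hr (m+1)]
      congr 1
      have hnum : (indMat2 (u2 (m+1)) K2 (u3 (m+1)) *ᵥ fun _ => (1:ℝ)) k = q (m+1) k := by
        show ∑ l, indMat2 (u2 (m+1)) K2 (u3 (m+1)) k l * 1 = q (m+1) k
        simp only [mul_one]
        exact hrowP2 k
      have hden : ((indMat1 (u1 (m+1)) K1 (u2 (m+1)))ᵀ *ᵥ fun _ => (1:ℝ)) k = p (m+1) k := by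
        show ∑ j, (indMat1 (u1 (m+1)) K1 (u2 (m+1)))ᵀ k j * 1 = p (m+1) k
        simp only [Matrix.transpose_apply, mul_one]
        exact hcolP1 k
      rw [hnum, hden]
    have hrpos : ∀ k, 0 < r (m+1) k := fun k => by
      rw [hrn k]
      exact Real.sqrt_pos.2 (div_pos (hqpos _ k) (hppos _ k))
    have hpr : ∀ k, p (m+1) k * r (m+1) k = Real.sqrt (p (m+1) k * q (m+1) k) := by
      intro k
      rw [hrn k, Real.sqrt_div (hqpos _ k).le, Real.sqrt_mul (hppos _ k).le,
        show p (m+1) k * (Real.sqrt (q (m+1) k) / Real.sqrt (p (m+1) k))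
          = Real.sqrt (q (m+1) k) * (p (m+1) k / Real.sqrt (p (m+1) k)) from by ring,
        Real.div_sqrt, mul_comm]
    have hqr : ∀ k, q (m+1) k * (r (m+1) k)⁻¹ = Real.sqrt (p (m+1) k * q (m+1) k) := by
      intro k
      rw [hrn k, ← Real.sqrt_inv, inv_div, Real.sqrt_div (hppos _ k).le,
        Real.sqrt_mul (hppos _ k).le,
        show q (m+1) k * (Real.sqrt (p (m+1) k) / Real.sqrt (q (m+1) k))
          = Real.sqrt (p (m+1) k) * (q (m+1) k / Real.sqrt (q (m+1) k)) from by ring,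
        Real.div_sqrt]
    have hterm1 : ∑ j, |a j - (indMat1 (u1 (m+1)) K1 (u2 (m+1)) *ᵥ r (m+1)) j|
        ≤ ∑ k, |p (m+1) k - Real.sqrt (p (m+1) k * q (m+1) k)| := by
      have h1 : ∀ j, a j - (indMat1 (u1 (m+1)) K1 (u2 (m+1)) *ᵥ r (m+1)) j
          = ∑ k, indMat1 (u1 (m+1)) K1 (u2 (m+1)) j k * (1 - r (m+1) k) := by
        intro j
        have hmv : (indMat1 (u1 (m+1)) K1 (u2 (m+1)) *ᵥ r (m+1)) j
            = ∑ k, indMat1 (u1 (m+1)) K1 (u2 (m+1)) j k * r (m+1) k := rfl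
        rw [hmv, ← hrow j, ← Finset.sum_sub_distrib]
        exact Finset.sum_congr rfl fun k _ => by ring
      calc ∑ j, |a j - (indMat1 (u1 (m+1)) K1 (u2 (m+1)) *ᵥ r (m+1)) j|
          = ∑ j, |∑ k, indMat1 (u1 (m+1)) K1 (u2 (m+1)) j k * (1 - r (m+1) k)| := by
            exact Finset.sum_congr rfl fun j _ => by rw [h1 j]
        _ ≤ ∑ j, ∑ k, |indMat1 (u1 (m+1)) K1 (u2 (m+1)) j k * (1 - r (m+1) k)| :=
            Finset.sum_le_sum fun j _ => Finset.abs_sum_le_sum_abs _ _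
        _ = ∑ k, ∑ j, indMat1 (u1 (m+1)) K1 (u2 (m+1)) j k * |1 - r (m+1) k| := by
            rw [Finset.sum_comm]
            exact Finset.sum_congr rfl fun k _ => Finset.sum_congr rfl fun j _ => by
              rw [abs_mul, abs_of_pos (hM1pos j k)]
        _ = ∑ k, p (m+1) k * |1 - r (m+1) k| := by
            exact Finset.sum_congr rfl fun k _ => by rw [← Finset.sum_mul, hcolP1 k]
        _ = ∑ k, |p (m+1) k - Real.sqrt (p (m+1) k * q (m+1) k)| := by
            apply Finset.sum_congr rfl
            intro k _
            rw [show p (m+1) k * |1 - r (m+1) k| = |p (m+1) k| * |1 - r (m+1) k| from by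
                rw [abs_of_pos (hppos _ k)],
              ← abs_mul, mul_sub, mul_one, hpr k]
    have hterm2 : ∑ l, |b l - ((indMat2 (u2 (m+1)) K2 (u3 (m+1)))ᵀ *ᵥ fun k => (r (m+1) k)⁻¹) l|
        ≤ ∑ k, |q (m+1) k - Real.sqrt (p (m+1) k * q (m+1) k)| := by
      have h1 : ∀ l, b l - ((indMat2 (u2 (m+1)) K2 (u3 (m+1)))ᵀ *ᵥ fun k => (r (m+1) k)⁻¹) l
          = ∑ k, indMat2 (u2 (m+1)) K2 (u3 (m+1)) k l * (1 - (r (m+1) k)⁻¹) := by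
        intro l
        have hmv : ((indMat2 (u2 (m+1)) K2 (u3 (m+1)))ᵀ *ᵥ fun k => (r (m+1) k)⁻¹) l
            = ∑ k, indMat2 (u2 (m+1)) K2 (u3 (m+1)) k l * (r (m+1) k)⁻¹ := by
          show ∑ k, (indMat2 (u2 (m+1)) K2 (u3 (m+1)))ᵀ l k * (r (m+1) k)⁻¹ = _
          simp only [Matrix.transpose_apply]
        rw [hmv, ← hcol l, ← Finset.sum_sub_distrib]
        exact Finset.sum_congr rfl fun k _ => by ring
      calc ∑ l, |b l - ((indMat2 (u2 (m+1)) K2 (u3 (m+1)))ᵀ *ᵥ fun k => (r (m+1) k)⁻¹) l|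
          = ∑ l, |∑ k, indMat2 (u2 (m+1)) K2 (u3 (m+1)) k l * (1 - (r (m+1) k)⁻¹)| := by
            exact Finset.sum_congr rfl fun l _ => by rw [h1 l]
        _ ≤ ∑ l, ∑ k, |indMat2 (u2 (m+1)) K2 (u3 (m+1)) k l * (1 - (r (m+1) k)⁻¹)| :=
            Finset.sum_le_sum fun l _ => Finset.abs_sum_le_sum_abs _ _
        _ = ∑ k, ∑ l, indMat2 (u2 (m+1)) K2 (u3 (m+1)) k l * |1 - (r (m+1) k)⁻¹| := by
            rw [Finset.sum_comm]
            exact Finset.sum_congr rfl fun k _ => Finset.sum_congr rfl fun l _ => by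
              rw [abs_mul, abs_of_pos (hM2pos k l)]
        _ = ∑ k, q (m+1) k * |1 - (r (m+1) k)⁻¹| := by
            exact Finset.sum_congr rfl fun k _ => by rw [← Finset.sum_mul, hrowP2 k]
        _ = ∑ k, |q (m+1) k - Real.sqrt (p (m+1) k * q (m+1) k)| := by
            apply Finset.sum_congr rfl
            intro k _
            rw [show q (m+1) k * |1 - (r (m+1) k)⁻¹| = |q (m+1) k| * |1 - (r (m+1) k)⁻¹| from by
                rw [abs_of_pos (hqpos _ k)],
              ← abs_mul, mul_sub, mul_one, hqr k]
    have habs : ∀ k, |p (m+1) k - Real.sqrt (p (m+1) k * q (m+1) k)|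
        + |q (m+1) k - Real.sqrt (p (m+1) k * q (m+1) k)|
        = (Real.sqrt (p (m+1) k) + Real.sqrt (q (m+1) k))
          * |Real.sqrt (p (m+1) k) - Real.sqrt (q (m+1) k)| := by
      intro k
      have e1 : p (m+1) k - Real.sqrt (p (m+1) k * q (m+1) k)
          = Real.sqrt (p (m+1) k) * (Real.sqrt (p (m+1) k) - Real.sqrt (q (m+1) k)) := by
        rw [Real.sqrt_mul (hppos _ k).le]
        linear_combination -Real.sq_sqrt (hppos (m+1) k).le
      have e2 : q (m+1) k - Real.sqrt (p (m+1) k * q (m+1) k)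
          = Real.sqrt (q (m+1) k) * (Real.sqrt (q (m+1) k) - Real.sqrt (p (m+1) k)) := by
        rw [Real.sqrt_mul (hppos _ k).le]
        linear_combination -Real.sq_sqrt (hqpos (m+1) k).le
      rw [e1, e2, abs_mul, abs_mul, abs_of_nonneg (Real.sqrt_nonneg _),
        abs_of_nonneg (Real.sqrt_nonneg _),
        abs_sub_comm (Real.sqrt (q (m+1) k)) (Real.sqrt (p (m+1) k))]
      ring
    have hStotal : S (m+1) ≤ ∑ k, (Real.sqrt (p (m+1) k) + Real.sqrt (q (m+1) k))
        * |Real.sqrt (p (m+1) k) - Real.sqrt (q (m+1) k)| := by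
      rw [hS (m+1)]
      calc _ ≤ (∑ k, |p (m+1) k - Real.sqrt (p (m+1) k * q (m+1) k)|)
            + ∑ k, |q (m+1) k - Real.sqrt (p (m+1) k * q (m+1) k)| := add_le_add hterm1 hterm2
        _ = ∑ k, (|p (m+1) k - Real.sqrt (p (m+1) k * q (m+1) k)|
            + |q (m+1) k - Real.sqrt (p (m+1) k * q (m+1) k)|) := (Finset.sum_add_distrib).symm
        _ = _ := Finset.sum_congr rfl fun k _ => habs k
    have hCS := Finset.sum_mul_sq_le_sq_mul_sq Finset.univ
      (fun k => Real.sqrt (p (m+1) k) + Real.sqrt (q (m+1) k))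
      (fun k => |Real.sqrt (p (m+1) k) - Real.sqrt (q (m+1) k)|)
    have h4 : ∑ k, (Real.sqrt (p (m+1) k) + Real.sqrt (q (m+1) k))^2 ≤ 4 := by
      have hk : ∀ k : Fin m2, (Real.sqrt (p (m+1) k) + Real.sqrt (q (m+1) k))^2
          ≤ 2 * (p (m+1) k + q (m+1) k) := by
        intro k
        nlinarith [Real.sq_sqrt (hppos (m+1) k).le, Real.sq_sqrt (hqpos (m+1) k).le,
          sq_nonneg (Real.sqrt (p (m+1) k) - Real.sqrt (q (m+1) k))]
      calc ∑ k, (Real.sqrt (p (m+1) k) + Real.sqrt (q (m+1) k))^2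
          ≤ ∑ k, 2 * (p (m+1) k + q (m+1) k) := Finset.sum_le_sum fun k _ => hk k
        _ = 4 := by
            rw [← Finset.mul_sum, Finset.sum_add_distrib, hpsum m, hqsum m]
            norm_num
    have habs2 : ∑ k, |Real.sqrt (p (m+1) k) - Real.sqrt (q (m+1) k)|^2 = H2 (m+1) := by
      simp only [hH2def]
      exact Finset.sum_congr rfl fun k _ => sq_abs _
    have hS0 : 0 ≤ S (m+1) := by
      rw [hS (m+1)]
      apply add_nonneg <;> exact Finset.sum_nonneg fun _ _ => abs_nonneg _
    calc (S (m+1))^2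
        ≤ (∑ k, (Real.sqrt (p (m+1) k) + Real.sqrt (q (m+1) k))
            * |Real.sqrt (p (m+1) k) - Real.sqrt (q (m+1) k)|)^2 :=
          pow_le_pow_left₀ hS0 hStotal 2
      _ ≤ (∑ k, (Real.sqrt (p (m+1) k) + Real.sqrt (q (m+1) k))^2)
            * ∑ k, |Real.sqrt (p (m+1) k) - Real.sqrt (q (m+1) k)|^2 := hCS
      _ ≤ 4 * H2 (m+1) := by
          rw [← habs2]
          apply mul_le_mul_of_nonneg_right h4
          exact Finset.sum_nonneg fun k _ => sq_nonneg _
  -- final assembly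
  have hΛeq : ε * Real.log ((∑ j, ∑ k, K1 j k) * (∑ k, ∑ l, K2 k l) / Kmin)
      = ε * Real.log (∑ j, ∑ k, K1 j k) + ε * Real.log (∑ k, ∑ l, K2 k l) - ε * Real.log Kmin := by
    rw [Real.log_div (mul_pos hSig1 hSig2).ne' hKminpos.ne', Real.log_mul hSig1.ne' hSig2.ne']
    ring
  set Λ := Real.log ((∑ j, ∑ k, K1 j k) * (∑ k, ∑ l, K2 k l) / Kmin) with hΛdef
  have hupper : SinkhornAux.G K1 K2 a b ε uh1 uh2 uh3 - L 0 ≤ ε * Λ := by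
    rw [hΛeq, hL0]
    linarith [hGh_le]
  have hΛpos : 0 ≤ Λ := by
    by_contra hneg
    push_neg at hneg
    have h1 : ε * Λ < 0 := mul_neg_of_pos_of_neg hε hneg
    linarith [hGh_ge 0, hupper]
  intro δ hδ
  by_contra hcon
  push_neg at hcon
  set N := max 1 (Nat.ceil (4/δ^2*Λ)) with hNdef
  have hx0 : 0 ≤ 4/δ^2*Λ := mul_nonneg (by positivity) hΛpos
  have hNcast : (N:ℝ) ≤ 1 + 4/δ^2*Λ := by
    rw [hNdef]
    push_cast [Nat.cast_max]
    apply max_le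
    · linarith
    · linarith [Nat.ceil_lt_add_one hx0]
  have hNge : 4/δ^2*Λ ≤ (N:ℝ) := by
    refine le_trans (Nat.le_ceil _) ?_
    exact_mod_cast Nat.cast_le.2 (le_max_right 1 _)
  have hstep : ∀ n ∈ Finset.Ico 1 (N+1), ε * (δ^2/4) < L (n+1) - L n := by
    intro n hn
    obtain ⟨hn1, hn2⟩ := Finset.mem_Ico.1 hn
    obtain ⟨m, rfl⟩ : ∃ m, n = m + 1 := ⟨n - 1, by omega⟩
    have hSn : δ < S (m+1) := by
      apply hcon
      have h1 : ((m+1:ℕ):ℝ) ≤ (N:ℝ) := by exact_mod_cast by omega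
      linarith [hNcast]
    have hS2 := hSbound m
    have hg := hgain (m+1)
    have hδ2 : δ^2 < (S (m+1))^2 := by nlinarith [hδ.le]
    have hh1 : ε * δ^2 < ε * (S (m+1))^2 := (mul_lt_mul_iff_right₀ hε).2 hδ2
    have hh2 : ε * (S (m+1))^2 ≤ ε * (4 * H2 (m+1)) := mul_le_mul_of_nonneg_left (hSbound m) hε.le
    linarith
  have hneIco : (Finset.Ico 1 (N+1)).Nonempty := ⟨1, Finset.mem_Ico.2 ⟨le_refl 1, by omega⟩⟩
  have hsumlt := Finset.sum_lt_sum_of_nonempty hneIco hstep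
  rw [SinkhornAux.telescope L N, Finset.sum_const, Nat.card_Ico] at hsumlt
  have hcard : N + 1 - 1 = N := by omega
  rw [hcard, nsmul_eq_mul] at hsumlt
  have hup : L (N+1) - L 1 ≤ ε * Λ := by
    have h1 := hGh_ge (N+1)
    have h2 := hmono 0
    linarith [hupper]
  have hlow : ε * Λ ≤ (N:ℝ) * (ε * (δ^2/4)) := by
    have heq : (4/δ^2*Λ) * (ε * (δ^2/4)) = ε * Λ := by
      field_simp
    calc ε*Λ = (4/δ^2*Λ)*(ε*(δ^2/4)) := heq.symm
      _ ≤ (N:ℝ)*(ε*(δ^2/4)) := mul_le_mul_of_nonneg_right hNge (by positivity)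
  linarith
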